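/- Information-theoretic privacy of Lagrange sharing: let W ∈ F_q be a random variable, let P₁,...,P_X be i.i.d. uniform on F_q and independent of W, let β₁,...,β_{X+1} ∈ F_q be pairwise distinct, and let α₁,...,α_X ∈ F_q be pairwise distinct with α_k ∉ {β₁,...,β_{X+1}}. Define shares f(α_k) for k ∈ [X] where f(z) = W·l₁(z) + Σ_{j=1}^X P_j·l_{j+1}(z) and l_t is the t-th Lagrange basis polynomial on nodes β₁,...,β_{X+1}. Then the joint distribution (f(α₁),...,f(α_X)) is uniform on F_q^X and independent of W; in particular I(W; f(α₁),...,f(α_X)) = 0. -/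

import Mathlib

open MeasureTheory Finset Polynomial

/-- If a linear combination of the Lagrange basis polynomials `l_{j+1}` (on nodes `β`)
vanishes at `X` points `α k` distinct from the nodes, the coefficients vanish. -/
private lemma lagrange_coeff_zero {F : Type*} [Field F] {X : ℕ}
    (β : Fin (X + 1) → F) (hβ : Function.Injective β)
    (α : Fin X → F) (hα : Function.Injective α)
    (hαβ : ∀ k j, α k ≠ β j)
    (p : Fin X → F)
    (hp : ∀ k, ∑ j : Fin X, p j * (Lagrange.basis Finset.univ β j.succ).eval (α k) = 0) :
    p = 0 := by
  classical
  have hβs : Set.InjOn β (Finset.univ : Finset (Fin (X + 1))) := hβ.injOn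
  set g : Polynomial F := ∑ j : Fin X, C (p j) * Lagrange.basis Finset.univ β j.succ with hg
  have hdeg : g.natDegree < X + 1 := by
    have h1 : g.natDegree ≤ X := by
      apply natDegree_sum_le_of_forall_le
      intro j _
      calc (C (p j) * Lagrange.basis Finset.univ β j.succ).natDegree
          ≤ (Lagrange.basis Finset.univ β j.succ).natDegree := natDegree_C_mul_le _ _
        _ = X := by
            rw [Lagrange.natDegree_basis hβs (mem_univ _)]
            simp
    omega
  -- the X+1 distinct roots
  set γ : Fin (X + 1) → F := Fin.cons (β 0) α with hγ
  have hγinj : Function.Injective γ := by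
    rw [hγ, Fin.cons_injective_iff]
    refine ⟨?_, hα⟩
    rintro ⟨k, hk⟩
    exact hαβ k 0 hk
  have heval : ∀ i, g.eval (γ i) = 0 := by
    intro i
    induction i using Fin.cases with
    | zero =>
        simp only [hγ, Fin.cons_zero, hg, eval_finset_sum, eval_mul, eval_C]
        refine Finset.sum_eq_zero fun j _ => ?_
        rw [Lagrange.eval_basis_of_ne (Fin.succ_ne_zero j) (mem_univ _), mul_zero]
    | succ k =>
        simpa only [hγ, Fin.cons_succ, hg, eval_finset_sum, eval_mul, eval_C] using hp k
  have hg0 : g = 0 := by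
    apply Polynomial.eq_zero_of_natDegree_lt_card_of_eval_eq_zero g hγinj heval
    simpa using hdeg
  funext i
  have : g.eval (β i.succ) = p i := by
    rw [hg, eval_finset_sum]
    rw [Finset.sum_eq_single i]
    · rw [eval_mul, eval_C, Lagrange.eval_basis_self hβs (mem_univ _), mul_one]
    · intro j _ hji
      rw [eval_mul, eval_C,
        Lagrange.eval_basis_of_ne (fun h => hji (Fin.succ_injective _ h)) (mem_univ _), mul_zero]
    · intro h; exact absurd (mem_univ i) h
  rw [hg0, eval_zero] at this
  simp [Pi.zero_apply, ← this]


private lemma measure_preimage_inter_sum {Ω G : Type*} [MeasurableSpace Ω]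
    [Fintype G] [MeasurableSpace G] (μ : MeasureTheory.Measure Ω)
    (f : Ω → G) (hf : ∀ w : G, MeasurableSet (f ⁻¹' {w}))
    (s : Set G) [DecidablePred (· ∈ s)] (A : Set Ω) (hA : MeasurableSet A) :
    μ (f ⁻¹' s ∩ A) = ∑ w ∈ Finset.univ.filter (· ∈ s), μ (f ⁻¹' {w} ∩ A) := by
  have hsplit : f ⁻¹' s ∩ A = ⋃ w ∈ Finset.univ.filter (· ∈ s), (f ⁻¹' {w} ∩ A) := by
    ext ω
    simp only [Set.mem_inter_iff, Set.mem_preimage, Set.mem_iUnion, Finset.mem_filter,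
      Finset.mem_univ, true_and, Set.mem_singleton_iff, exists_prop]
    constructor
    · rintro ⟨hs, hA⟩; exact ⟨f ω, hs, rfl, hA⟩
    · rintro ⟨w, hw, rfl, hA⟩; exact ⟨hw, hA⟩
  rw [hsplit, measure_biUnion_finset
    (((Set.pairwiseDisjoint_fiber f _).mono (fun w => Set.inter_subset_left)))
    (fun w _ => (hf w).inter hA)]

theorem lagrange_sharing_privacy
    {Ω : Type*} [MeasurableSpace Ω] (μ : Measure Ω) [IsProbabilityMeasure μ]
    {F : Type*} [Field F] [Fintype F] [MeasurableSpace F] [MeasurableSingletonClass F]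
    {X : ℕ} (hX : 1 ≤ X)
    (W : Ω → F) (P : Fin X → Ω → F)
    (hmW : Measurable W) (hmP : ∀ j, Measurable (P j))
    -- W, P₁, ..., P_X are mutually independent
    (hindep : ProbabilityTheory.iIndepFun (m := fun _ : Fin (X + 1) => ‹MeasurableSpace F›)
      (Fin.cons W P) μ)
    -- each Pⱼ is uniform on F
    (hPunif : ∀ j, ∀ x : F, μ (P j ⁻¹' {x}) = 1 / (Fintype.card F : ENNReal))
    (β : Fin (X + 1) → F) (hβ : Function.Injective β)
    (α : Fin X → F) (hα : Function.Injective α)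
    (hαβ : ∀ k j, α k ≠ β j)
    -- the Lagrange basis functions on the nodes β
    (l : Fin (X + 1) → F → F)
    (hl : ∀ t z, l t z = ∏ s ∈ univ \ {t}, (z - β s) / (β t - β s))
    -- the shares
    (share : Fin X → Ω → F)
    (hshare : ∀ k ω, share k ω = W ω * l 0 (α k) + ∑ j : Fin X, P j ω * l j.succ (α k)) :
    (∀ v : Fin X → F,
        μ ((fun ω k => share k ω) ⁻¹' {v}) = 1 / ((Fintype.card F : ENNReal)) ^ X)
    ∧ ProbabilityTheory.IndepFun W (fun ω k => share k ω) μ := by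
  classical
  set q : ENNReal := (Fintype.card F : ENNReal) with hq
  have hβs : Set.InjOn β (Finset.univ : Finset (Fin (X + 1))) := hβ.injOn
  -- l is evaluation of the Lagrange basis polynomial
  have hle : ∀ t z, l t z = (Lagrange.basis Finset.univ β t).eval z := by
    intro t z
    rw [hl, Lagrange.basis, eval_prod, ← Finset.erase_eq]
    refine Finset.prod_congr rfl fun s _ => ?_
    simp [Lagrange.basisDivisor, div_eq_mul_inv, mul_comm]
  -- the sharing map for a fixed secret
  set S : F → (Fin X → F) → (Fin X → F) :=
    fun w p k => w * l 0 (α k) + ∑ j : Fin X, p j * l j.succ (α k) with hS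
  have hSbij : ∀ w, Function.Bijective (S w) := by
    intro w
    rw [← Finite.injective_iff_bijective]
    intro p p' h
    have hd : ∀ k, ∑ j : Fin X, (p j - p' j) *
        (Lagrange.basis Finset.univ β j.succ).eval (α k) = 0 := by
      intro k
      have hk := congrFun h k
      simp only [hS] at hk
      have hk' : ∑ j : Fin X, p j * l j.succ (α k) = ∑ j : Fin X, p' j * l j.succ (α k) :=
        add_left_cancel hk
      simp only [sub_mul, Finset.sum_sub_distrib, ← hle]
      rw [hk', sub_self]
    have := lagrange_coeff_zero β hβ α hα hαβ (p - p') (by simpa using hd)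
    exact sub_eq_zero.mp (by simpa [funext_iff, sub_eq_zero] using this)
  set e : F → ((Fin X → F) ≃ (Fin X → F)) := fun w => Equiv.ofBijective _ (hSbij w) with he
  -- share as a function of W and the P's
  have hshare' : ∀ ω, (fun k => share k ω) = S (W ω) (fun j => P j ω) := by
    intro ω; funext k; rw [hshare, hS]
  -- measurability of the share vector
  have hmshare : Measurable (fun ω k => share k ω) := by
    have : (fun ω k => share k ω) =
        (fun u : Fin (X + 1) → F => S (u 0) (fun j => u j.succ)) ∘
          (fun ω i => (Fin.cons W P : Fin (X + 1) → Ω → F) i ω) := by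
      funext ω
      rw [hshare' ω]
      simp [Fin.cons_zero, Fin.cons_succ]
    rw [this]
    exact (measurable_of_finite _).comp
      (measurable_pi_lambda _ (fun i => Fin.cases hmW hmP i))
  -- the key joint-measure identity on singletons
  have hset : ∀ (w : F) (v : Fin X → F),
      W ⁻¹' {w} ∩ (fun ω k => share k ω) ⁻¹' {v}
        = ⋂ i : Fin (X + 1),
            (Fin.cons W P : Fin (X + 1) → Ω → F) i ⁻¹'
              (Fin.cons {w} (fun j => {(e w).symm v j}) : Fin (X + 1) → Set F) i := by
    intro w v
    ext ω
    simp only [Set.mem_inter_iff, Set.mem_preimage, Set.mem_singleton_iff, Set.mem_iInter]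
    constructor
    · rintro ⟨hw, hv⟩
      have hv' : S w (fun j => P j ω) = v := by rw [← hw, ← hshare' ω]; exact hv
      have hP : (fun j => P j ω) = (e w).symm v := by
        apply_fun (e w).symm at hv'
        rw [← hv']
        exact (Equiv.symm_apply_apply (e w) _).symm
      intro i
      induction i using Fin.cases with
      | zero => simpa using hw
      | succ j => simpa using congrFun hP j
    · intro h
      have hw : W ω = w := by simpa using h 0
      have hP : (fun j => P j ω) = (e w).symm v := by
        funext j; simpa using h j.succ
      refine ⟨hw, ?_⟩
      rw [hshare' ω, hw, hP]
      exact (e w).apply_symm_apply v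
  have hjoint : ∀ (w : F) (v : Fin X → F),
      μ (W ⁻¹' {w} ∩ (fun ω k => share k ω) ⁻¹' {v}) = μ (W ⁻¹' {w}) * (1 / q) ^ X := by
    intro w v
    rw [hset w v]
    have hmeas : ∀ i : Fin (X + 1), i ∈ Finset.univ →
        MeasurableSet ((Fin.cons {w} (fun j => {(e w).symm v j}) : Fin (X + 1) → Set F) i) := by
      intro i _
      induction i using Fin.cases with
      | zero => simpa using measurableSet_singleton w
      | succ j => simpa using measurableSet_singleton ((e w).symm v j)
    have key := (ProbabilityTheory.iIndepFun_iff_measure_inter_preimage_eq_mul.1 hindep)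
      Finset.univ (sets := (Fin.cons {w} (fun j => {(e w).symm v j}) : Fin (X + 1) → Set F)) hmeas
    simp only [Finset.mem_univ, Set.iInter_true] at key
    rw [key, Fin.prod_univ_succ]
    simp only [Fin.cons_zero, Fin.cons_succ]
    congr 1
    rw [Finset.prod_congr rfl (fun j _ => hPunif j ((e w).symm v j)), Finset.prod_const]
    simp [hq]
  have hW1 : ∑ w : F, μ (W ⁻¹' {w}) = 1 := by
    rw [sum_measure_preimage_singleton Finset.univ
      (fun w _ => hmW (measurableSet_singleton w))]
    simp
  have hsingle : ∀ v : Fin X → F, μ ((fun ω k => share k ω) ⁻¹' {v}) = (1 / q) ^ X := by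
    intro v
    have : (fun ω k => share k ω) ⁻¹' {v}
        = W ⁻¹' Set.univ ∩ (fun ω k => share k ω) ⁻¹' {v} := by simp
    rw [this, measure_preimage_inter_sum μ W (fun w => hmW (measurableSet_singleton w)) Set.univ _ (hmshare (measurableSet_singleton v))]
    simp only [Set.mem_univ, Finset.filter_true]
    rw [Finset.sum_congr rfl (fun w _ => hjoint w v), ← Finset.sum_mul, hW1, one_mul]
  refine ⟨fun v => ?_, ?_⟩
  · rw [hsingle v, one_div, one_div, ENNReal.inv_pow]
  · rw [ProbabilityTheory.indepFun_iff_measure_inter_preimage_eq_mul]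
    intro s t hs ht
    have hcs : (↑(Finset.univ.filter (· ∈ s)) : Set F) = s := by ext w; simp
    have hct : (↑(Finset.univ.filter (· ∈ t)) : Set (Fin X → F)) = t := by ext v; simp
    have hWs : μ (W ⁻¹' s) = ∑ w ∈ Finset.univ.filter (· ∈ s), μ (W ⁻¹' {w}) := by
      rw [sum_measure_preimage_singleton _ (fun w _ => hmW (measurableSet_singleton w)), hcs]
    have hSt : μ ((fun ω k => share k ω) ⁻¹' t)
        = ∑ v ∈ Finset.univ.filter (· ∈ t), μ ((fun ω k => share k ω) ⁻¹' {v}) := by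
      rw [sum_measure_preimage_singleton _
        (fun v _ => hmshare (measurableSet_singleton v)), hct]
    rw [measure_preimage_inter_sum μ W (fun w => hmW (measurableSet_singleton w)) s _ (hmshare ht), hWs, hSt, Finset.sum_mul_sum]
    refine Finset.sum_congr rfl fun w _ => ?_
    rw [Set.inter_comm, measure_preimage_inter_sum μ _ (fun v => hmshare (measurableSet_singleton v)) t _ (hmW (measurableSet_singleton w))]
    refine Finset.sum_congr rfl fun v _ => ?_
    rw [Set.inter_comm, hjoint w v, hsingle v]
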